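/- Let G be the real symmetric 5×5 matrix with rows (−2, 3, 2, 2, 2), (3, −2, 1, 1, 1), (2, 1, −2, 0, 0), (2, 1, 0, −2, 0), (2, 1, 0, 0, −2). Then G is symmetric and, counted with multiplicity, exactly one eigenvalue of G is positive and four eigenvalues of G are negative; that is, the associated real quadratic form has signature (1,4). -/

import Mathlib

open Matrix

/-- The Gram matrix of the lattice `𝕃` in the basis `(Γ, Q, L₁, L₂, L₃)`. -/
noncomputable def gramMatrixR : Matrix (Fin 5) (Fin 5) ℝ :=
  !![-2, 3, 2, 2, 2;
      3, -2, 1, 1, 1;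
      2, 1, -2, 0, 0;
      2, 1, 0, -2, 0;
      2, 1, 0, 0, -2]

lemma gram_symm : gramMatrixR.IsSymm := by
  ext i j
  fin_cases i <;> fin_cases j <;> simp [gramMatrixR, Matrix.IsSymm, vecHead, vecTail]

lemma gram_sub_smul_one (x : ℝ) :
    gramMatrixR - x • (1 : Matrix (Fin 5) (Fin 5) ℝ) =
    !![-2-x, 3, 2, 2, 2;
      3, -2-x, 1, 1, 1;
      2, 1, -2-x, 0, 0;
      2, 1, 0, -2-x, 0;
      2, 1, 0, 0, -2-x] := by
  ext i j
  fin_cases i <;> fin_cases j <;>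
    simp [gramMatrixR, Matrix.one_apply, vecHead, vecTail]

set_option maxHeartbeats 4000000 in
lemma gram_det_eval (x : ℝ) :
    det (gramMatrixR - x • (1 : Matrix (Fin 5) (Fin 5) ℝ)) =
      -(x^5 + 10*x^4 + 16*x^3 - 100*x^2 - 352*x - 304) := by
  rw [gram_sub_smul_one]
  have h3 : ((3:Fin 4):ℕ) = 3 := rfl
  simp [Matrix.det_succ_row_zero, Fin.sum_univ_succ, Fin.succAbove]
  ring

lemma gram_det : det gramMatrixR = 304 := by
  have := gram_det_eval 0
  simpa using this

lemma gram_trace : trace gramMatrixR = -10 := by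
  simp [gramMatrixR, Matrix.trace, Fin.sum_univ_succ, Matrix.diag, vecHead, vecTail]
  norm_num

/-- every eigenvalue is a root of the characteristic polynomial -/
lemma eig_root (hG : gramMatrixR.IsHermitian) (i : Fin 5) :
    (hG.eigenvalues i)^5 + 10*(hG.eigenvalues i)^4 + 16*(hG.eigenvalues i)^3
      - 100*(hG.eigenvalues i)^2 - 352*(hG.eigenvalues i) - 304 = 0 := by
  set x := hG.eigenvalues i with hx
  have hv := hG.mulVec_eigenvectorBasis i
  have hvne : (⇑(hG.eigenvectorBasis i) : Fin 5 → ℝ) ≠ 0 := by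
    intro h
    have hb : hG.eigenvectorBasis i = 0 := by
      ext j
      exact congrFun h j
    have := hG.eigenvectorBasis.orthonormal.1 i
    rw [hb] at this
    simp at this
  have hmv : (gramMatrixR - x • (1 : Matrix (Fin 5) (Fin 5) ℝ)) *ᵥ
      (⇑(hG.eigenvectorBasis i) : Fin 5 → ℝ) = 0 := by
    rw [Matrix.sub_mulVec, Matrix.smul_mulVec, Matrix.one_mulVec, hv]
    simp [hx]
  have hdet : det (gramMatrixR - x • (1 : Matrix (Fin 5) (Fin 5) ℝ)) = 0 := by
    rw [← Matrix.exists_mulVec_eq_zero_iff]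
    exact ⟨_, hvne, hmv⟩
  have := gram_det_eval x
  rw [hdet] at this
  linarith

lemma pos_root_bound {x : ℝ}
    (h : x^5 + 10*x^4 + 16*x^3 - 100*x^2 - 352*x - 304 = 0) (hx : 0 < x) :
    (7:ℝ)/2 < x := by
  by_contra hle
  push_neg at hle
  have hc : x^3 + 6*x^2 - 12*x - 76 < 0 := by
    nlinarith [sq_nonneg x, sq_nonneg (x - 2), sq_nonneg (x - 7/2), mul_pos hx hx,
      mul_nonneg (mul_nonneg hx.le hx.le) hx.le]
  have hf : x^5 + 10*x^4 + 16*x^3 - 100*x^2 - 352*x - 304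
      = (x+2)^2 * (x^3 + 6*x^2 - 12*x - 76) := by ring
  nlinarith [sq_nonneg (x+2), mul_pos (mul_pos hx hx) hx]

lemma root_lower_bound {x : ℝ}
    (h : x^5 + 10*x^4 + 16*x^3 - 100*x^2 - 352*x - 304 = 0) :
    -(59:ℝ)/10 < x := by
  by_contra hle
  push_neg at hle
  have hx2 : (0:ℝ) < (x+2)^2 := by nlinarith
  have hc : x^3 + 6*x^2 - 12*x - 76 < 0 := by nlinarith [sq_nonneg (x + 59/10), sq_nonneg x]
  have hf : x^5 + 10*x^4 + 16*x^3 - 100*x^2 - 352*x - 304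
      = (x+2)^2 * (x^3 + 6*x^2 - 12*x - 76) := by ring
  nlinarith [mul_pos hx2 (neg_pos.mpr hc)]

lemma root_ne_zero {x : ℝ}
    (h : x^5 + 10*x^4 + 16*x^3 - 100*x^2 - 352*x - 304 = 0) : x ≠ 0 := by
  intro h0; rw [h0] at h; norm_num at h

lemma prod_neg_sign {s : Finset (Fin 5)} (g : Fin 5 → ℝ) :
    ∏ i ∈ s, (-g i) = (-1)^s.card * ∏ i ∈ s, g i := by
  induction s using Finset.cons_induction with
  | empty => simp
  | cons a s ha ih =>
    rw [Finset.prod_cons, Finset.prod_cons, ih, Finset.card_cons, pow_succ]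
    ring

set_option maxRecDepth 100000 in
/-- The Gram matrix is symmetric and has signature `(1,4)`: exactly one positive
eigenvalue and four negative eigenvalues, counted with multiplicity. -/
theorem stmt_2 :
    gramMatrixR.IsSymm ∧
    ∀ hG : gramMatrixR.IsHermitian,
      (Finset.univ.filter fun i => 0 < hG.eigenvalues i).card = 1 ∧
      (Finset.univ.filter fun i => hG.eigenvalues i < 0).card = 4 := by
  refine ⟨gram_symm, fun hG => ?_⟩
  set f := hG.eigenvalues with hf
  -- basic facts about eigenvalues
  have hroot : ∀ i, (f i)^5 + 10*(f i)^4 + 16*(f i)^3 - 100*(f i)^2 - 352*(f i) - 304 = 0 :=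
    eig_root hG
  have hne : ∀ i, f i ≠ 0 := fun i => root_ne_zero (hroot i)
  have hlb : ∀ i, -(59:ℝ)/10 < f i := fun i => root_lower_bound (hroot i)
  have hposb : ∀ i, 0 < f i → (7:ℝ)/2 < f i := fun i h => pos_root_bound (hroot i) h
  -- trace = sum of eigenvalues
  have htrace : ∑ i, f i = -10 := by
    have hst := hG.spectral_theorem
    have h1 : trace gramMatrixR = trace (diagonal (RCLike.ofReal ∘ f) : Matrix (Fin 5) (Fin 5) ℝ) := by
      conv_lhs => rw [hst]
      rw [Unitary.conjStarAlgAut_apply, Matrix.trace_mul_cycle]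
      rw [Unitary.star_mul_self_of_mem hG.eigenvectorUnitary.2, Matrix.one_mul]
    rw [gram_trace] at h1
    have h2 : trace (diagonal (RCLike.ofReal ∘ f) : Matrix (Fin 5) (Fin 5) ℝ) = ∑ i, f i := by
      rw [Matrix.trace_diagonal]
      simp
    rw [h2] at h1
    linarith
  -- det = product of eigenvalues
  have hdet : ∏ i, f i = 304 := by
    have := hG.det_eq_prod_eigenvalues
    rw [gram_det] at this
    exact_mod_cast this.symm
  classical
  set P := Finset.univ.filter fun i => 0 < f i with hP
  set N := Finset.univ.filter fun i => f i < 0 with hN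
  have hNalt : N = Finset.univ.filter fun i => ¬ 0 < f i := by
    apply Finset.filter_congr
    intro i _
    constructor
    · intro h; exact not_lt.mpr h.le
    · intro h; exact lt_of_le_of_ne (not_lt.mp h) (hne i)
  have hcard : P.card + N.card = 5 := by
    rw [hNalt, hP]
    rw [Finset.card_filter_add_card_filter_not]
    simp
  -- sum bound: P.card ≤ 2
  have hsumP : (7:ℝ)/2 * P.card ≤ ∑ i ∈ P, f i := by
    have := Finset.card_nsmul_le_sum P f ((7:ℝ)/2)
      (fun i hi => (hposb i (Finset.mem_filter.mp hi).2).le)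
    rw [nsmul_eq_mul] at this
    linarith
  have hsumN : -(59:ℝ)/10 * N.card ≤ ∑ i ∈ N, f i := by
    have := Finset.card_nsmul_le_sum N f (-(59:ℝ)/10)
      (fun i hi => (hlb i).le)
    rw [nsmul_eq_mul] at this
    linarith
  have hsplit : ∑ i ∈ P, f i + ∑ i ∈ N, f i = -10 := by
    rw [hNalt, hP]
    rw [Finset.sum_filter_add_sum_filter_not]
    exact htrace
  have hPle : P.card ≤ 2 := by
    by_contra hgt
    push_neg at hgt
    have h3 : (3:ℝ) ≤ P.card := by exact_mod_cast hgt
    have hN2 : (N.card : ℝ) = 5 - P.card := by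
      have : (P.card : ℝ) + N.card = 5 := by exact_mod_cast hcard
      linarith
    nlinarith [hsumP, hsumN, hsplit]
  -- parity: N.card is even
  have hprodsplit : (∏ i ∈ P, f i) * ∏ i ∈ N, f i = 304 := by
    rw [hNalt, hP, Finset.prod_filter_mul_prod_filter_not]
    exact hdet
  have hprodP : 0 < ∏ i ∈ P, f i :=
    Finset.prod_pos fun i hi => (Finset.mem_filter.mp hi).2
  have hprodN : 0 < ∏ i ∈ N, f i := by
    by_contra hle
    push_neg at hle
    nlinarith [mul_nonpos_of_nonneg_of_nonpos hprodP.le hle]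
  have hNeven : Even N.card := by
    have h1 : ∏ i ∈ N, f i = (-1)^N.card * ∏ i ∈ N, (-f i) := by
      rw [prod_neg_sign]
      rw [show ∀ (a b c : ℝ), a * (b * c) = (a * b) * c from fun a b c => by ring]
      rw [← mul_pow]
      simp
    have hprodNeg : 0 < ∏ i ∈ N, (-f i) :=
      Finset.prod_pos fun i hi => neg_pos.mpr (Finset.mem_filter.mp hi).2
    by_contra hodd
    rw [Nat.not_even_iff_odd] at hodd
    rw [hodd.neg_one_pow] at h1
    nlinarith
  have hN4 : N.card = 4 := by
    rcases hNeven with ⟨k, hk⟩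
    omega
  exact ⟨by omega, hN4⟩
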